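/- arXiv:2103.03785 — 4 statements merged into one kernel-verified Lean document; each statement's English description precedes it below -/
import Mathlib

section
/- Let G be a nilpotent group of class at most 5. Then for all x, y in G and every positive integer n, [xⁿ, y] = [x,y]ⁿ · [x,y,x]^(n choose 2) · [x,y,x,x]^(n choose 3) · [x,y,x,x,x]^(n choose 4) · [x,y,x,[x,y]]^σ(n), where σ(n) = n(n-1)(2n-1)/6. -/
/-- The commutator `[a,b] = a⁻¹ b⁻¹ a b`. -/
def cmt {G : Type*} [Group G] (a b : G) : G := a⁻¹ * b⁻¹ * a * b

section Aux
variable {G : Type*} [Group G]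
open scoped commutatorElement

lemma cmt_one_left (b : G) : cmt 1 b = 1 := by unfold cmt; group

lemma cmt_one_right (a : G) : cmt a 1 = 1 := by unfold cmt; group

lemma cmt_mul_left (a b c : G) :
    cmt (a * b) c = cmt a c * cmt (cmt a c) b * cmt b c := by unfold cmt; group

lemma cmt_mul_right (a b c : G) :
    cmt a (b * c) = cmt a c * cmt a b * cmt (cmt a b) c := by unfold cmt; group

lemma cmt_eq_commutator (a b : G) : cmt a b = ⁅a⁻¹, b⁻¹⁆ := by
  simp [cmt, commutatorElement_def, mul_assoc]

lemma cmt_eq_one_iff {a b : G} : cmt a b = 1 ↔ Commute a b := by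
  rw [cmt_eq_commutator, commutatorElement_eq_one_iff_commute]
  constructor
  · intro h; simpa using h.inv_inv
  · intro h; exact h.inv_inv

lemma cmt_mem_commutator {H K : Subgroup G} {a b : G} (ha : a ∈ H) (hb : b ∈ K) :
    cmt a b ∈ ⁅H, K⁆ := by
  rw [cmt_eq_commutator]
  exact Subgroup.commutator_mem_commutator (H.inv_mem ha) (K.inv_mem hb)

/-- swap under right-association -/
lemma comm_left {a b : G} (h : a * b = b * a) (c : G) : a * (b * c) = b * (a * c) := by
  rw [← mul_assoc, h, mul_assoc]

/-- Hall–Witt identity (mathlib bracket convention). -/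
lemma hall_witt (a b c : G) :
    b⁻¹ * ⁅⁅b, a⁻¹⁆, c⁻¹⁆ * b * (c⁻¹ * ⁅⁅c, b⁻¹⁆, a⁻¹⁆ * c) *
      (a⁻¹ * ⁅⁅a, c⁻¹⁆, b⁻¹⁆ * a) = 1 := by
  simp only [commutatorElement_def]
  group

lemma comm_mul_left_mem {N : Subgroup G} (hN : N.Normal) {g h c : G}
    (hg : ⁅g, c⁆ ∈ N) (hh : ⁅h, c⁆ ∈ N) : ⁅g * h, c⁆ ∈ N := by
  have e : ⁅g * h, c⁆ = g * ⁅h, c⁆ * g⁻¹ * ⁅g, c⁆ := by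
    simp only [commutatorElement_def]; group
  rw [e]
  exact N.mul_mem (hN.conj_mem _ hh g) hg

lemma comm_inv_left_mem {N : Subgroup G} (hN : N.Normal) {g c : G}
    (hg : ⁅g, c⁆ ∈ N) : ⁅g⁻¹, c⁆ ∈ N := by
  have e : ⁅g⁻¹, c⁆ = g⁻¹ * ⁅g, c⁆⁻¹ * (g⁻¹)⁻¹ := by
    simp only [commutatorElement_def]; group
  rw [e]
  exact hN.conj_mem _ (N.inv_mem hg) g⁻¹

lemma lcs_succ' (n : ℕ) :
    (⊤ : Subgroup G).lowerCentralSeries (n + 1) = ⁅(⊤ : Subgroup G).lowerCentralSeries n, ⊤⁆ := rfl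

/-- Three subgroups lemma. -/
lemma three_subgroups {A B C N : Subgroup G} [hN : N.Normal]
    (h1 : ⁅⁅B, C⁆, A⁆ ≤ N) (h2 : ⁅⁅C, A⁆, B⁆ ≤ N) : ⁅⁅A, B⁆, C⁆ ≤ N := by
  have key0 : ∀ a ∈ A, ∀ b ∈ B, ∀ c ∈ C, ⁅⁅b, a⁻¹⁆, c⁻¹⁆ ∈ N := by
    intro a ha b hb c hc
    have hY : ⁅⁅c, b⁻¹⁆, a⁻¹⁆ ∈ N := by
      apply h1
      rw [Subgroup.commutator_comm B C]
      exact Subgroup.commutator_mem_commutator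
        (Subgroup.commutator_mem_commutator hc (B.inv_mem hb)) (A.inv_mem ha)
    have hZ : ⁅⁅a, c⁻¹⁆, b⁻¹⁆ ∈ N := by
      apply h2
      rw [Subgroup.commutator_comm C A]
      exact Subgroup.commutator_mem_commutator
        (Subgroup.commutator_mem_commutator ha (C.inv_mem hc)) (B.inv_mem hb)
    have hw := hall_witt a b c
    have hY' : c⁻¹ * ⁅⁅c, b⁻¹⁆, a⁻¹⁆ * c ∈ N := by
      have := hN.conj_mem _ hY c⁻¹; simpa using this
    have hZ' : a⁻¹ * ⁅⁅a, c⁻¹⁆, b⁻¹⁆ * a ∈ N := by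
      have := hN.conj_mem _ hZ a⁻¹; simpa using this
    have hX' : b⁻¹ * ⁅⁅b, a⁻¹⁆, c⁻¹⁆ * b =
        ((c⁻¹ * ⁅⁅c, b⁻¹⁆, a⁻¹⁆ * c) * (a⁻¹ * ⁅⁅a, c⁻¹⁆, b⁻¹⁆ * a))⁻¹ := by
      rw [eq_inv_iff_mul_eq_one, ← mul_assoc]
      exact hw
    have hXmem : b⁻¹ * ⁅⁅b, a⁻¹⁆, c⁻¹⁆ * b ∈ N := by
      rw [hX']; exact N.inv_mem (N.mul_mem hY' hZ')
    have e : ⁅⁅b, a⁻¹⁆, c⁻¹⁆ = b * (b⁻¹ * ⁅⁅b, a⁻¹⁆, c⁻¹⁆ * b) * b⁻¹ := by group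
    rw [e]
    exact hN.conj_mem _ hXmem b
  have key : ∀ a ∈ A, ∀ b ∈ B, ∀ c ∈ C, ⁅⁅a, b⁆, c⁆ ∈ N := by
    intro a ha b hb c hc
    have h0 := key0 a⁻¹ (A.inv_mem ha) b hb c⁻¹ (C.inv_mem hc)
    simp only [inv_inv] at h0
    have e : ⁅a, b⁆ = ⁅b, a⁆⁻¹ := (commutatorElement_inv b a).symm
    rw [e]
    exact comm_inv_left_mem hN h0
  let K : Subgroup G :=
    { carrier := {g | ∀ c ∈ C, ⁅g, c⁆ ∈ N}
      one_mem' := by intro c hc; simpa using N.one_mem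
      mul_mem' := fun hg hh c hc => comm_mul_left_mem hN (hg c hc) (hh c hc)
      inv_mem' := fun hg c hc => comm_inv_left_mem hN (hg c hc) }
  have hABK : ⁅A, B⁆ ≤ K := by
    rw [Subgroup.commutator_le]
    intro a ha b hb
    exact fun c hc => key a ha b hb c hc
  rw [Subgroup.commutator_le]
  intro g hg c hc
  exact hABK hg c hc

/-- `⁅γᵢ, γⱼ⁆ ≤ γ_{i+j+1}`. -/
lemma lcs_comm : ∀ (j i : ℕ),
    ⁅(⊤ : Subgroup G).lowerCentralSeries i, (⊤ : Subgroup G).lowerCentralSeries j⁆ ≤ (⊤ : Subgroup G).lowerCentralSeries (i + j + 1) := by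
  intro j
  induction j with
  | zero =>
    intro i
    rw [Subgroup.lowerCentralSeries_zero]
    exact le_of_eq (lcs_succ' i).symm
  | succ j ih =>
    intro i
    rw [lcs_succ' j,
      Subgroup.commutator_comm ((⊤ : Subgroup G).lowerCentralSeries i) ⁅(⊤ : Subgroup G).lowerCentralSeries j, ⊤⁆]
    have h1 : ⁅⁅(⊤ : Subgroup G), (⊤ : Subgroup G).lowerCentralSeries i⁆, (⊤ : Subgroup G).lowerCentralSeries j⁆ ≤
        (⊤ : Subgroup G).lowerCentralSeries (i + (j + 1) + 1) := by
      rw [Subgroup.commutator_comm (⊤ : Subgroup G) ((⊤ : Subgroup G).lowerCentralSeries i),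
        ← lcs_succ']
      have := ih (i + 1)
      have e : i + 1 + j + 1 = i + (j + 1) + 1 := by omega
      rwa [e] at this
    have h2 : ⁅⁅(⊤ : Subgroup G).lowerCentralSeries i, (⊤ : Subgroup G).lowerCentralSeries j⁆, (⊤ : Subgroup G)⁆ ≤
        (⊤ : Subgroup G).lowerCentralSeries (i + (j + 1) + 1) := by
      calc ⁅⁅(⊤ : Subgroup G).lowerCentralSeries i, (⊤ : Subgroup G).lowerCentralSeries j⁆, (⊤ : Subgroup G)⁆
          ≤ ⁅(⊤ : Subgroup G).lowerCentralSeries (i + j + 1), (⊤ : Subgroup G)⁆ :=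
            Subgroup.commutator_mono (ih i) le_rfl
        _ = (⊤ : Subgroup G).lowerCentralSeries (i + j + 1 + 1) := (lcs_succ' _).symm
        _ = (⊤ : Subgroup G).lowerCentralSeries (i + (j + 1) + 1) := by ring_nf
    exact three_subgroups h1 h2

lemma sq_six : ∀ m : ℕ, m * (m - 1) * (2 * m - 1) + 6 * (m * m) = (m + 1) * m * (2 * m + 1) := by
  intro m
  cases m with
  | zero => decide
  | succ k =>
    have e1 : k + 1 - 1 = k := rfl
    have e2 : 2 * (k + 1) - 1 = 2 * k + 1 := by omega
    rw [e1, e2]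
    ring

lemma six_dvd (m : ℕ) : 6 ∣ m * (m - 1) * (2 * m - 1) := by
  induction m with
  | zero => decide
  | succ k ih =>
    have e2 : 2 * (k + 1) - 1 = 2 * k + 1 := by omega
    have e1 : (k + 1) * (k + 1 - 1) * (2 * (k + 1) - 1) = (k + 1) * k * (2 * k + 1) := by
      rw [e2]; rfl
    rw [e1, ← sq_six k]
    omega

lemma sigma_succ (m : ℕ) :
    (m + 1) * ((m + 1) - 1) * (2 * (m + 1) - 1) / 6 = m * (m - 1) * (2 * m - 1) / 6 + m * m := by
  have e2 : 2 * (m + 1) - 1 = 2 * m + 1 := by omega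
  have e1 : (m + 1) * ((m + 1) - 1) * (2 * (m + 1) - 1) = (m + 1) * m * (2 * m + 1) := by
    rw [e2]; rfl
  have h := sq_six m
  have hd := six_dvd m
  omega

end Aux

theorem stmt_5 {G : Type*} [Group G]
    (hG : (⊤ : Subgroup G).lowerCentralSeries 5 = ⊥) (x y : G) (n : ℕ) (hn : 0 < n) :
    cmt (x ^ n) y =
      (cmt x y) ^ n * (cmt (cmt x y) x) ^ n.choose 2 *
        (cmt (cmt (cmt x y) x) x) ^ n.choose 3 *
        (cmt (cmt (cmt (cmt x y) x) x) x) ^ n.choose 4 *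
        (cmt (cmt (cmt x y) x) (cmt x y)) ^ (n * (n - 1) * (2 * n - 1) / 6) := by
  clear hn
  set c1 : G := cmt x y with hc1
  set c2 : G := cmt c1 x with hc2
  set c3 : G := cmt c2 x with hc3
  set c4 : G := cmt c3 x with hc4
  set d : G := cmt c2 c1 with hd
  have hcl : ∀ (i : ℕ) (a b : G), a ∈ (⊤ : Subgroup G).lowerCentralSeries i →
      cmt a b ∈ (⊤ : Subgroup G).lowerCentralSeries (i + 1) := by
    intro i a b ha
    rw [lcs_succ']
    exact cmt_mem_commutator ha (Subgroup.mem_top b)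
  have m1 : c1 ∈ (⊤ : Subgroup G).lowerCentralSeries 1 := hcl 0 x y trivial
  have m2 : c2 ∈ (⊤ : Subgroup G).lowerCentralSeries 2 := hcl 1 c1 x m1
  have m3 : c3 ∈ (⊤ : Subgroup G).lowerCentralSeries 3 := hcl 2 c2 x m2
  have m4 : c4 ∈ (⊤ : Subgroup G).lowerCentralSeries 4 := hcl 3 c3 x m3
  have md : d ∈ (⊤ : Subgroup G).lowerCentralSeries 4 := lcs_comm 1 2 (cmt_mem_commutator m2 m1)
  have hcomm : ∀ (i j : ℕ) (a b : G), 4 ≤ i + j → a ∈ (⊤ : Subgroup G).lowerCentralSeries i →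
      b ∈ (⊤ : Subgroup G).lowerCentralSeries j → Commute a b := by
    intro i j a b hij ha hb
    have h : cmt a b ∈ (⊤ : Subgroup G).lowerCentralSeries (i + j + 1) := lcs_comm j i (cmt_mem_commutator ha hb)
    have h5 : (⊤ : Subgroup G).lowerCentralSeries (i + j + 1) ≤ (⊤ : Subgroup G).lowerCentralSeries 5 :=
      (⊤ : Subgroup G).lowerCentralSeries_antitone (by omega)
    rw [← cmt_eq_one_iff]
    have h' := h5 h
    rw [hG] at h'
    exact h'
  have top_mem : ∀ g : G, g ∈ (⊤ : Subgroup G).lowerCentralSeries 0 := fun g => trivial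
  have K4 : ∀ g : G, Commute c4 g := fun g => hcomm 4 0 c4 g (by omega) m4 (top_mem g)
  have Kd : ∀ g : G, Commute d g := fun g => hcomm 4 0 d g (by omega) md (top_mem g)
  have K31 : Commute c3 c1 := hcomm 3 1 c3 c1 (by omega) m3 m1
  have K32 : Commute c3 c2 := hcomm 3 2 c3 c2 (by omega) m3 m2
  have Z4 : ∀ g : G, cmt c4 g = 1 := fun g => cmt_eq_one_iff.mpr (K4 g)
  -- power formulas
  have P3 : ∀ m : ℕ, cmt c3 (x ^ m) = c4 ^ m := by
    intro m
    induction m with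
    | zero => simpa using cmt_one_right c3
    | succ m ih =>
      rw [pow_succ' x m, cmt_mul_right, ih, ← hc4, Z4, pow_succ]
      group
  have P2 : ∀ m : ℕ, cmt c2 (x ^ m) = c3 ^ m * c4 ^ m.choose 2 := by
    intro m
    induction m with
    | zero => simpa using cmt_one_right c2
    | succ m ih =>
      rw [pow_succ' x m, cmt_mul_right, ih, ← hc3, P3 m]
      have e : (m + 1).choose 2 = m.choose 2 + m := by
        rw [Nat.choose_succ_succ, Nat.choose_one_right, Nat.add_comm]
      rw [e, pow_succ c3 m, pow_add]
      simp only [mul_assoc]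
      rw [comm_left ((K4 c3).pow_left (m.choose 2)).eq]
  have P1 : ∀ m : ℕ, cmt c1 (x ^ m) = c2 ^ m * c3 ^ m.choose 2 * c4 ^ m.choose 3 := by
    intro m
    induction m with
    | zero => simpa using cmt_one_right c1
    | succ m ih =>
      rw [pow_succ' x m, cmt_mul_right, ih, ← hc2, P2 m]
      have e2 : (m + 1).choose 2 = m.choose 2 + m := by
        rw [Nat.choose_succ_succ, Nat.choose_one_right, Nat.add_comm]
      have e3 : (m + 1).choose 3 = m.choose 3 + m.choose 2 := by
        rw [Nat.choose_succ_succ, Nat.add_comm]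
      rw [e2, e3, pow_succ c2 m, pow_add, pow_add]
      simp only [mul_assoc]
      -- LHS: c2^m * (c3^A * (c4^B * (c2 * (c3^m * c4^A))))
      -- RHS: c2^m * (c2 * (c3^A * (c3^m * (c4^B * c4^A))))
      rw [comm_left ((K4 c2).pow_left (m.choose 3)).eq]
      rw [comm_left ((K32.pow_left (m.choose 2)).eq)]
      rw [comm_left (((K4 c3).pow_pow (m.choose 3) m).eq)]
  -- the c2/c1 swap
  have h21 : c2 * c1 = c1 * c2 * d := by
    rw [hd]; unfold cmt; group
  have hup : ∀ p : ℕ, c2 ^ p * c1 = c1 * c2 ^ p * d ^ p := by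
    intro p
    induction p with
    | zero => simp
    | succ p ih =>
      rw [pow_succ' c2 p, pow_succ' d p]
      calc c2 * c2 ^ p * c1 = c2 * (c2 ^ p * c1) := by rw [mul_assoc]
        _ = c2 * (c1 * c2 ^ p * d ^ p) := by rw [ih]
        _ = (c2 * c1) * c2 ^ p * d ^ p := by group
        _ = (c1 * c2 * d) * c2 ^ p * d ^ p := by rw [h21]
        _ = c1 * c2 * (d * c2 ^ p) * d ^ p := by group
        _ = c1 * c2 * (c2 ^ p * d) * d ^ p := by rw [(Kd (c2 ^ p)).eq]
        _ = c1 * (c2 * c2 ^ p) * (d * d ^ p) := by group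
  have hswap : ∀ p q : ℕ, c2 ^ p * c1 ^ q = c1 ^ q * c2 ^ p * d ^ (p * q) := by
    intro p q
    induction q with
    | zero => simp
    | succ q ih =>
      have em : p * (q + 1) = p * q + p := by ring
      rw [pow_succ' c1 q, em, pow_add]
      calc c2 ^ p * (c1 * c1 ^ q) = (c2 ^ p * c1) * c1 ^ q := by rw [mul_assoc]
        _ = c1 * c2 ^ p * d ^ p * c1 ^ q := by rw [hup p]
        _ = c1 * c2 ^ p * (d ^ p * c1 ^ q) := by group
        _ = c1 * c2 ^ p * (c1 ^ q * d ^ p) := by rw [((Kd c1).pow_pow p q).eq]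
        _ = c1 * (c2 ^ p * c1 ^ q) * d ^ p := by group
        _ = c1 * (c1 ^ q * c2 ^ p * d ^ (p * q)) * d ^ p := by rw [ih]
        _ = (c1 * c1 ^ q) * c2 ^ p * (d ^ (p * q) * d ^ p) := by group
  -- main induction
  induction n with
  | zero => simp [cmt_one_left]
  | succ m ih =>
    have e2 : (m + 1).choose 2 = m + m.choose 2 := by
      rw [Nat.choose_succ_succ, Nat.choose_one_right]
    have e3 : (m + 1).choose 3 = m.choose 2 + m.choose 3 := Nat.choose_succ_succ m 2
    have e4 : (m + 1).choose 4 = m.choose 3 + m.choose 4 := Nat.choose_succ_succ m 3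
    have eS := sigma_succ m
    rw [pow_succ' x m, cmt_mul_left, ih, ← hc1, P1 m, e2, e3, e4, eS,
      pow_succ' c1 m, pow_add, pow_add, pow_add, pow_add]
    simp only [mul_assoc]
    -- LHS: c1 * (c2^m * (c3^A * (c4^B * (c1^m * (c2^A * (c3^B * (c4^C * d^S)))))))
    -- RHS: c1 * (c1^m * (c2^m * (c2^A * (c3^A * (c3^B * (c4^B * (c4^C * (d^S * d^(m*m)))))))))
    rw [comm_left ((K4 c1).pow_pow (m.choose 3) m).eq]
    rw [comm_left ((K31.pow_pow (m.choose 2) m).eq)]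
    rw [show ∀ t : G, c2 ^ m * (c1 ^ m * t) = c1 ^ m * (c2 ^ m * (d ^ (m * m) * t)) from
      fun t => by rw [← mul_assoc, hswap m m]; group]
    rw [comm_left ((Kd c3).pow_pow (m * m) (m.choose 2)).eq]
    rw [comm_left ((Kd c4).pow_pow (m * m) (m.choose 3)).eq]
    rw [comm_left ((Kd c2).pow_pow (m * m) (m.choose 2)).eq]
    rw [comm_left ((Kd c3).pow_pow (m * m) (m.choose 3)).eq]
    rw [comm_left ((Kd c4).pow_pow (m * m) (m.choose 4)).eq]
    rw [((Kd d).pow_pow (m * m) (m * ((m - 1) * (2 * m - 1)) / 6)).eq]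
    rw [comm_left ((K4 c2).pow_pow (m.choose 3) (m.choose 2)).eq]
    rw [comm_left ((K32.pow_pow (m.choose 2) (m.choose 2)).eq)]
    rw [comm_left ((K4 c3).pow_pow (m.choose 3) (m.choose 3)).eq]
end

section
/- Let S be an abelian group, let R and U be subgroups of S, and let T be a subgroup of R with T ≤ U. Let D be a divisible abelian group. Then a homomorphism h : R/T → D lies in the image of the natural map Hom(S/U, D) → Hom(R/T, D) (induced by inclusion R ↪ S and the quotient maps) if and only if h vanishes on (R ∩ U)/T. Consequently, the cokernel of this map is isomorphic to Hom((R ∩ U)/T, D). -/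
theorem stmt_10 {S : Type*} [AddCommGroup S] (R U T : AddSubgroup S)
    (hTR : T ≤ R) (hTU : T ≤ U)
    (D : Type*) [AddCommGroup D]
    (hD : ∀ (d : D) (n : ℕ), 0 < n → ∃ e : D, n • e = d)
    (h : R ⧸ T.addSubgroupOf R →+ D) :
    ((∃ f : S ⧸ U →+ D, ∀ r : R,
        h (QuotientAddGroup.mk r) = f (QuotientAddGroup.mk (r : S))) ↔
      ∀ r : R, (r : S) ∈ U → h (QuotientAddGroup.mk r) = 0) ∧
    Nonempty
      (((R ⧸ T.addSubgroupOf R →+ D) ⧸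
          (AddMonoidHom.range
            { toFun := fun f : S ⧸ U →+ D =>
                f.comp (QuotientAddGroup.map (T.addSubgroupOf R) U R.subtype
                  (fun t ht => hTU ht))
              map_zero' := rfl
              map_add' := fun f g => rfl })) ≃+
        ((R ⊓ U : AddSubgroup S) ⧸ T.addSubgroupOf (R ⊓ U) →+ D)) := by
  classical
  haveI : DivisibleBy D ℕ :=
    { div := fun d n => if hn : 0 < n then (hD d n hn).choose else 0
      div_zero := fun a => dif_neg (lt_irrefl 0)
      div_cancel := fun {n} a hn => by
        simp only [dif_pos (Nat.pos_of_ne_zero hn)]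
        exact (hD a n (Nat.pos_of_ne_zero hn)).choose_spec }
  haveI : DivisibleBy D ℤ := AddGroup.divisibleByIntOfDivisibleByNat D
  have baer : Module.Baer ℤ D := Module.Baer.of_divisible D
  -- part 1, generic in the hom
  have part1 : ∀ g : R ⧸ T.addSubgroupOf R →+ D,
      (∃ f : S ⧸ U →+ D, ∀ r : R,
        g (QuotientAddGroup.mk r) = f (QuotientAddGroup.mk (r : S))) ↔
      ∀ r : R, (r : S) ∈ U → g (QuotientAddGroup.mk r) = 0 := by
    intro g
    constructor
    · rintro ⟨f, hf⟩ r hr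
      rw [hf r, (QuotientAddGroup.eq_zero_iff _).mpr hr, map_zero]
    · intro h0
      set ψ : R →+ S ⧸ U := (QuotientAddGroup.mk' U).comp R.subtype with hψ
      have hker : ∀ r : R, r ∈ ψ.ker ↔ (r : S) ∈ U := by
        intro r
        simp [ψ, AddMonoidHom.mem_ker, QuotientAddGroup.eq_zero_iff]
      set gb : R →+ D := g.comp (QuotientAddGroup.mk' (T.addSubgroupOf R)) with hgb
      set h' : ↥R ⧸ ψ.ker →+ D :=
        QuotientAddGroup.lift ψ.ker gb (fun r hr => h0 r ((hker r).mp hr)) with hh'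
      set e := QuotientAddGroup.quotientKerEquivRange ψ with he
      obtain ⟨f, hf⟩ := baer.extension_property_addMonoidHom ψ.range.subtype
        Subtype.val_injective (h'.comp e.symm.toAddMonoidHom)
      refine ⟨f, fun r => ?_⟩
      have hm : ψ r ∈ ψ.range := ⟨r, rfl⟩
      have h2 : e.symm ⟨ψ r, hm⟩ = QuotientAddGroup.mk r := by
        rw [AddEquiv.symm_apply_eq]
        rfl
      have h3 := DFunLike.congr_fun hf ⟨ψ r, hm⟩
      simp only [AddMonoidHom.comp_apply, AddEquiv.toAddMonoidHom_eq_coe, AddMonoidHom.coe_coe] at h3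
      have h4 : ψ.range.subtype ⟨ψ r, hm⟩ = QuotientAddGroup.mk (r : S) := rfl
      rw [h4] at h3
      rw [h3, h2]
      rfl
  refine ⟨part1 h, ?_⟩
  set Φ : (S ⧸ U →+ D) →+ (↥R ⧸ T.addSubgroupOf R →+ D) :=
    { toFun := fun f : S ⧸ U →+ D =>
        f.comp (QuotientAddGroup.map (T.addSubgroupOf R) U R.subtype
          (fun t ht => hTU ht))
      map_zero' := rfl
      map_add' := fun f g => rfl } with hΦ
  have hTRU : T.addSubgroupOf (R ⊓ U) ≤
      (T.addSubgroupOf R).comap (AddSubgroup.inclusion (inf_le_left : R ⊓ U ≤ R)) :=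
    fun x hx => hx
  set j : (↥(R ⊓ U) ⧸ T.addSubgroupOf (R ⊓ U)) →+ (↥R ⧸ T.addSubgroupOf R) :=
    QuotientAddGroup.map _ _ (AddSubgroup.inclusion inf_le_left) hTRU with hj
  have hjinj : Function.Injective j := by
    rw [injective_iff_map_eq_zero]
    intro a ha
    induction a using QuotientAddGroup.induction_on with
    | H x =>
      have hx : j (QuotientAddGroup.mk x) =
          QuotientAddGroup.mk (AddSubgroup.inclusion inf_le_left x) := rfl
      rw [hx, QuotientAddGroup.eq_zero_iff] at ha
      exact (QuotientAddGroup.eq_zero_iff x).mpr ha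
  set ρ : (↥R ⧸ T.addSubgroupOf R →+ D) →+ (↥(R ⊓ U) ⧸ T.addSubgroupOf (R ⊓ U) →+ D) :=
    { toFun := fun g => g.comp j
      map_zero' := rfl
      map_add' := fun _ _ => rfl } with hρ
  have hsurj : Function.Surjective ρ := fun g => by
    obtain ⟨f, hf⟩ := baer.extension_property_addMonoidHom j hjinj g
    exact ⟨f, hf⟩
  have hker2 : ∀ g : ↥R ⧸ T.addSubgroupOf R →+ D,
      ρ g = 0 ↔ ∀ r : ↥R, (r : S) ∈ U → g (QuotientAddGroup.mk r) = 0 := by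
    intro g
    constructor
    · intro hg r hr
      have := DFunLike.congr_fun hg
        (QuotientAddGroup.mk (⟨(r : S), ⟨r.2, hr⟩⟩ : ↥(R ⊓ U)))
      exact this
    · intro h0
      ext a
      exact h0 (AddSubgroup.inclusion inf_le_left a) a.2.2
  have hkereq : Φ.range = ρ.ker := by
    ext g
    rw [AddMonoidHom.mem_ker, hker2 g, ← part1 g, AddMonoidHom.mem_range]
    constructor
    · rintro ⟨f, rfl⟩
      exact ⟨f, fun r => rfl⟩
    · rintro ⟨f, hf⟩
      refine ⟨f, ?_⟩
      ext a
      exact (hf a).symm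
  exact ⟨(QuotientAddGroup.quotientAddEquivOfEq hkereq).trans
    (QuotientAddGroup.quotientKerEquivOfSurjective ρ hsurj)⟩
end

section
/- Let G be a group, N a normal subgroup, and χ : N → ℚ/ℤ a homomorphism that vanishes on every commutator [x,y] of G that lies in N. Fix a set-theoretic section μ : G/N → G of the quotient map, and define α(x̄, ȳ) = χ(μ(x̄)μ(ȳ)μ(x̄ȳ)⁻¹) for x̄, ȳ ∈ G/N. Then for any subgroup A of G containing N such that A/N is abelian, α is symmetric on A/N, i.e., α(ā, b̄) = α(b̄, ā) for all ā, b̄ ∈ A/N. -/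
/-- `ℚ/ℤ` as an additive group. -/
abbrev QmodZ : Type := AddCircle (1 : ℚ)

theorem stmt_12 {G : Type*} [Group G] (N : Subgroup G) [N.Normal]
    (χ : N →* Multiplicative QmodZ)
    (hχ : ∀ x y : G, ∀ h : x⁻¹ * y⁻¹ * x * y ∈ N, χ ⟨x⁻¹ * y⁻¹ * x * y, h⟩ = 1)
    (μ : G ⧸ N → G) (hμ : ∀ q : G ⧸ N, (μ q : G ⧸ N) = q)
    (α : G ⧸ N → G ⧸ N → Multiplicative QmodZ)
    (hα : ∀ (q₁ q₂ : G ⧸ N) (h : μ q₁ * μ q₂ * (μ (q₁ * q₂))⁻¹ ∈ N),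
      α q₁ q₂ = χ ⟨μ q₁ * μ q₂ * (μ (q₁ * q₂))⁻¹, h⟩)
    (A : Subgroup G) (hNA : N ≤ A)
    (hab : ∀ a b : G, a ∈ A → b ∈ A → a⁻¹ * b⁻¹ * a * b ∈ N) :
    ∀ a b : G, a ∈ A → b ∈ A → α (a : G ⧸ N) (b : G ⧸ N) = α (b : G ⧸ N) (a : G ⧸ N) := by
  intro a b ha hb
  set p : G ⧸ N := (a : G ⧸ N) with hp
  set q : G ⧸ N := (b : G ⧸ N) with hq
  set x : G := μ p with hxdef
  set y : G := μ q with hydef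
  -- x, y lie in A
  have hxA : x ∈ A := by
    have h1 : ((x : G) : G ⧸ N) = ((a : G) : G ⧸ N) := hμ p
    rw [QuotientGroup.eq] at h1
    have : a * (x⁻¹ * a)⁻¹ = x := by group
    exact this ▸ A.mul_mem ha (A.inv_mem (hNA h1))
  have hyA : y ∈ A := by
    have h1 : ((y : G) : G ⧸ N) = ((b : G) : G ⧸ N) := hμ q
    rw [QuotientGroup.eq] at h1
    have : b * (y⁻¹ * b)⁻¹ = y := by group
    exact this ▸ A.mul_mem hb (A.inv_mem (hNA h1))
  -- p and q commute
  have hpq : p * q = q * p := by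
    rw [hp, hq, ← QuotientGroup.mk_mul, ← QuotientGroup.mk_mul, QuotientGroup.eq]
    have : (a * b)⁻¹ * (b * a) = b⁻¹ * a⁻¹ * b * a := by group
    rw [this]
    exact hab b a hb ha
  -- the two cocycle elements
  have h1 : x * y * (μ (p * q))⁻¹ ∈ N := by
    rw [← QuotientGroup.eq_one_iff]
    simp [hμ]
    simp only [hxdef, hydef, hμ]
    group
  have h2 : y * x * (μ (q * p))⁻¹ ∈ N := by
    rw [← QuotientGroup.eq_one_iff]
    simp [hμ]
    simp only [hxdef, hydef, hμ]
    group
  have h2' : y * x * (μ (p * q))⁻¹ ∈ N := by rw [hpq]; exact h2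
  -- commutator of x, y lies in N
  have hc : x⁻¹⁻¹ * y⁻¹⁻¹ * x⁻¹ * y⁻¹ ∈ N := by
    have heq : x⁻¹⁻¹ * y⁻¹⁻¹ * x⁻¹ * y⁻¹ =
        (x * y * (μ (p * q))⁻¹) * (y * x * (μ (p * q))⁻¹)⁻¹ := by group
    rw [heq]
    exact N.mul_mem h1 (N.inv_mem h2')
  have hkey : χ ⟨x * y * (μ (p * q))⁻¹, h1⟩ = χ ⟨y * x * (μ (p * q))⁻¹, h2'⟩ := by
    rw [← mul_inv_eq_one, ← map_inv, ← map_mul]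
    have : (⟨x * y * (μ (p * q))⁻¹, h1⟩ : N) * (⟨y * x * (μ (p * q))⁻¹, h2'⟩ : N)⁻¹ =
        ⟨x⁻¹⁻¹ * y⁻¹⁻¹ * x⁻¹ * y⁻¹, hc⟩ := by
      ext
      simp only [Subgroup.coe_mul, InvMemClass.coe_inv]
      group
    rw [this]
    exact hχ x⁻¹ y⁻¹ hc
  rw [hα p q h1, hα q p h2, hkey]
  congr 1
  ext
  simp only
  rw [hpq]
end

section
/- Let H and N be groups, H₁ a subgroup of the center of H, N₁ a subgroup of the center of N, and ξ : H₁ → N₁ an isomorphism satisfying ξ(H₁ ∩ [H,H]) ⊆ N₁ ∩ K(N), where K(N) is the set of commutators of N. Let Z = {(a, ξ(a)⁻¹) : a ∈ H₁} ≤ H × N. Then Z ∩ ([H,H] × [N,N]) equals the subgroup generated by Z ∩ (K(H) × K(N)) if and only if H₁ ∩ [H,H] equals the subgroup generated by H₁ ∩ K(H). -/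
/-- `Kset G` is the set of commutators `[x,y] = x⁻¹y⁻¹xy` of `G`. -/
def Kset (G : Type*) [Group G] : Set G := {g | ∃ x y : G, g = x⁻¹ * y⁻¹ * x * y}

lemma Kset_inv {G : Type*} [Group G] {g : G} (h : g ∈ Kset G) : g⁻¹ ∈ Kset G := by
  obtain ⟨x, y, rfl⟩ := h
  exact ⟨y, x, by group⟩

lemma Kset_subset_commutator {G : Type*} [Group G] {g : G} (h : g ∈ Kset G) :
    g ∈ commutator G := by
  obtain ⟨x, y, rfl⟩ := h
  have := Subgroup.commutator_mem_commutator (Subgroup.mem_top x⁻¹) (Subgroup.mem_top y⁻¹)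
  rw [commutator_def]
  simpa [commutatorElement_def] using this

theorem stmt_13 {H N : Type*} [Group H] [Group N]
    (H₁ : Subgroup H) (N₁ : Subgroup N)
    (hH₁ : H₁ ≤ Subgroup.center H) (hN₁ : N₁ ≤ Subgroup.center N)
    (ξ : H₁ ≃* N₁)
    (hξ : ∀ a : H₁, (a : H) ∈ commutator H → ((ξ a : N₁) : N) ∈ Kset N)
    (Z : Subgroup (H × N))
    (hZ : ∀ p : H × N, p ∈ Z ↔ ∃ a : H₁, p = ((a : H), ((ξ a : N₁) : N)⁻¹)) :
    Z ⊓ (commutator H).prod (commutator N) =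
        Subgroup.closure ((Z : Set (H × N)) ∩ (Kset H ×ˢ Kset N)) ↔
      H₁ ⊓ commutator H = Subgroup.closure ((H₁ : Set H) ∩ Kset H) := by
  -- the embedding a ↦ (a, ξ(a)⁻¹)
  let e : H₁ →* H × N :=
    { toFun := fun a => ((a : H), ((ξ a : N₁) : N)⁻¹)
      map_one' := by simp
      map_mul' := fun a b => by
        have hc : ((ξ a : N₁) : N) * ((ξ b : N₁) : N) = ((ξ b : N₁) : N) * ((ξ a : N₁) : N) :=
          ((Subgroup.mem_center_iff.mp (hN₁ (ξ a).2)) _).symm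
        ext
        · simp
        · simp only [map_mul, Prod.snd_mul]
          push_cast
          rw [mul_inv_rev, ← mul_inv_rev, hc, mul_inv_rev] }
  have he : ∀ a : H₁, e a = ((a : H), ((ξ a : N₁) : N)⁻¹) := fun a => rfl
  have einj : Function.Injective e := by
    intro a b hab
    have : (a : H) = (b : H) := congrArg Prod.fst hab
    exact Subtype.ext this
  have sinj : Function.Injective H₁.subtype := H₁.subtype_injective
  set A : Subgroup H₁ := Subgroup.comap H₁.subtype (commutator H) with hA
  set S₀ : Set H₁ := {a : H₁ | (a : H) ∈ Kset H} with hS₀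
  set B : Subgroup H₁ := Subgroup.closure S₀ with hB
  -- image facts
  have h2 : Subgroup.map e A = Z ⊓ (commutator H).prod (commutator N) := by
    ext p
    simp only [Subgroup.mem_map, Subgroup.mem_inf, Subgroup.mem_prod, hA,
      Subgroup.mem_comap, Subgroup.coe_subtype]
    constructor
    · rintro ⟨a, ha, rfl⟩
      refine ⟨(hZ _).mpr ⟨a, rfl⟩, ha, ?_⟩
      exact (commutator N).inv_mem (Kset_subset_commutator (hξ a ha))
    · rintro ⟨hpZ, hp1, hp2⟩
      obtain ⟨a, rfl⟩ := (hZ p).mp hpZ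
      exact ⟨a, hp1, rfl⟩
  have h3 : Subgroup.map e B = Subgroup.closure ((Z : Set (H × N)) ∩ (Kset H ×ˢ Kset N)) := by
    rw [hB, MonoidHom.map_closure]
    congr 1
    ext p
    simp only [Set.mem_image, Set.mem_inter_iff, Set.mem_prod, SetLike.mem_coe, hS₀,
      Set.mem_setOf_eq]
    constructor
    · rintro ⟨a, ha, rfl⟩
      exact ⟨(hZ _).mpr ⟨a, rfl⟩, ha, Kset_inv (hξ a (Kset_subset_commutator ha))⟩
    · rintro ⟨hpZ, hp1, hp2⟩
      obtain ⟨a, rfl⟩ := (hZ p).mp hpZ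
      exact ⟨a, hp1, rfl⟩
  have h4 : Subgroup.map H₁.subtype A = H₁ ⊓ commutator H := by
    rw [hA, Subgroup.map_comap_eq, Subgroup.range_subtype]
  have h5 : Subgroup.map H₁.subtype B = Subgroup.closure ((H₁ : Set H) ∩ Kset H) := by
    rw [hB, MonoidHom.map_closure]
    congr 1
    ext x
    simp only [Set.mem_image, Set.mem_inter_iff, SetLike.mem_coe, hS₀, Set.mem_setOf_eq,
      Subgroup.coe_subtype]
    constructor
    · rintro ⟨a, ha, rfl⟩
      exact ⟨a.2, ha⟩
    · rintro ⟨hx, hk⟩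
      exact ⟨⟨x, hx⟩, hk, rfl⟩
  rw [← h2, ← h3, ← h4, ← h5]
  exact ⟨fun h => congrArg _ (Subgroup.map_injective einj h),
    fun h => congrArg _ (Subgroup.map_injective sinj h)⟩
end
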